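/- If X is a Hilbert space and W ⊂ X is a centrally symmetric compact set, then the linear n-width equals the Kolmogorov n-width: λ_n(W,X) = d_n(W,X). -/

import Mathlib

noncomputable def kolWidth {X : Type*} [NormedAddCommGroup X] [NormedSpace ℝ X]
    (W : Set X) (n : ℕ) : ℝ :=
  ⨅ L : {L : Submodule ℝ X // FiniteDimensional ℝ L ∧ Module.finrank ℝ L ≤ n},
    ⨆ f : W, ⨅ g : L.1, ‖(f : X) - (g : X)‖

noncomputable def linWidth {X : Type*} [NormedAddCommGroup X] [NormedSpace ℝ X]
    (W : Set X) (n : ℕ) : ℝ :=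
  ⨅ A : {A : X →L[ℝ] X //
      FiniteDimensional ℝ (LinearMap.range (A : X →ₗ[ℝ] X)) ∧
      Module.finrank ℝ (LinearMap.range (A : X →ₗ[ℝ] X)) ≤ n},
    ⨆ f : W, ‖(f : X) - A.1 f‖

lemma kol_term_nonneg {X : Type*} [NormedAddCommGroup X] [NormedSpace ℝ X]
    (W : Set X) (L : Submodule ℝ X) :
    0 ≤ ⨆ f : W, ⨅ g : L, ‖(f : X) - (g : X)‖ := by
  apply Real.iSup_nonneg
  intro f
  apply Real.iInf_nonneg
  intro g
  exact norm_nonneg _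

/-- if `X` is a Hilbert space and `W ⊆ X` is a centrally symmetric
compact set, then the linear `n`-width equals the Kolmogorov `n`-width. -/
theorem linWidth_eq_kolWidth_of_hilbert {X : Type*} [NormedAddCommGroup X]
    [InnerProductSpace ℝ X] [CompleteSpace X]
    (W : Set X) (hW : IsCompact W) (hsym : ∀ f ∈ W, -f ∈ W) (n : ℕ) :
    linWidth W n = kolWidth W n := by
  obtain ⟨C, hC⟩ := hW.isBounded.exists_norm_le
  haveI : Nonempty {L : Submodule ℝ X // FiniteDimensional ℝ L ∧ Module.finrank ℝ L ≤ n} :=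
    ⟨⟨⊥, inferInstance, by simp⟩⟩
  haveI : Nonempty {A : X →L[ℝ] X //
      FiniteDimensional ℝ (LinearMap.range (A : X →ₗ[ℝ] X)) ∧
      Module.finrank ℝ (LinearMap.range (A : X →ₗ[ℝ] X)) ≤ n} := by
    refine ⟨⟨0, ?_, ?_⟩⟩ <;>
      rw [show ((0 : X →L[ℝ] X) : X →ₗ[ℝ] X) = 0 from rfl, LinearMap.range_zero]
    · infer_instance
    · simp
  apply le_antisymm
  · -- linWidth ≤ kolWidth : use orthogonal projection
    apply le_ciInf
    rintro ⟨L, hLfin, hLrank⟩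
    haveI : FiniteDimensional ℝ L := hLfin
    haveI : CompleteSpace L := FiniteDimensional.complete ℝ L
    set A : X →L[ℝ] X := L.subtypeL.comp (Submodule.orthogonalProjectionOnto L) with hA
    have hrange : LinearMap.range (A : X →ₗ[ℝ] X) ≤ L := by
      rintro x ⟨y, rfl⟩
      exact (Submodule.orthogonalProjectionOnto L y).2
    haveI hfin : FiniteDimensional ℝ (LinearMap.range (A : X →ₗ[ℝ] X)) :=
      Submodule.finiteDimensional_of_le hrange
    have hrank : Module.finrank ℝ (LinearMap.range (A : X →ₗ[ℝ] X)) ≤ n :=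
      le_trans (Submodule.finrank_mono hrange) hLrank
    have key : ∀ f : W, ‖(f : X) - A f‖ = ⨅ g : L, ‖(f : X) - (g : X)‖ := by
      intro f
      exact Submodule.starProjection_minimal (f : X)
    calc linWidth W n ≤ ⨆ f : W, ‖(f : X) - A f‖ := by
          apply ciInf_le _ (⟨A, hfin, hrank⟩ :
            {A : X →L[ℝ] X // FiniteDimensional ℝ (LinearMap.range (A : X →ₗ[ℝ] X)) ∧
              Module.finrank ℝ (LinearMap.range (A : X →ₗ[ℝ] X)) ≤ n})
          refine ⟨0, ?_⟩
          rintro x ⟨B, rfl⟩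
          exact Real.iSup_nonneg fun f => norm_nonneg _
      _ = ⨆ f : W, ⨅ g : L, ‖(f : X) - (g : X)‖ := by
          exact iSup_congr key
  · -- kolWidth ≤ linWidth
    apply le_ciInf
    rintro ⟨A, hfin, hrank⟩
    set L : Submodule ℝ X := LinearMap.range (A : X →ₗ[ℝ] X) with hL
    have h1 : kolWidth W n ≤ ⨆ f : W, ⨅ g : L, ‖(f : X) - (g : X)‖ := by
      apply ciInf_le _ (⟨L, hfin, hrank⟩ :
        {L : Submodule ℝ X // FiniteDimensional ℝ L ∧ Module.finrank ℝ L ≤ n})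
      exact ⟨0, by rintro x ⟨B, rfl⟩; exact kol_term_nonneg W B.1⟩
    refine h1.trans ?_
    rcases isEmpty_or_nonempty W with hempty | hne
    · simp [iSup_of_empty']
    · apply ciSup_le
      intro f
      have hle : (⨅ g : L, ‖(f : X) - (g : X)‖) ≤ ‖(f : X) - A f‖ := by
        apply ciInf_le _ (⟨A f, LinearMap.mem_range_self _ _⟩ : L)
        exact ⟨0, by rintro x ⟨g, rfl⟩; exact norm_nonneg _⟩
      refine hle.trans ?_
      apply le_ciSup_of_le ?_ f le_rfl
      refine ⟨C + ‖A‖ * C, ?_⟩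
      rintro x ⟨g, rfl⟩
      have h2 : ‖(g : X) - A g‖ ≤ ‖(g : X)‖ + ‖A g‖ := norm_sub_le _ _
      have h3 : ‖A (g : X)‖ ≤ ‖A‖ * ‖(g : X)‖ := A.le_opNorm _
      have h4 : ‖(g : X)‖ ≤ C := hC _ g.2
      have h5 : ‖A‖ * ‖(g : X)‖ ≤ ‖A‖ * C := by
        exact mul_le_mul_of_nonneg_left h4 (norm_nonneg A)
      linarith
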